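/- Lemma 1 (gauge on an edge): Let A₁,A₂,A₃ and B₁,B₂,B₃ be two triples of injective MPS tensors generating the same three-site state: ∑Tr(A₁^i A₂^j A₃^k)|ijk⟩ = ∑Tr(B₁^i B₂^j B₃^k)|ijk⟩. Then the virtual bond dimensions on the edge (1,2) agree, and there exists an invertible matrix Z, unique up to a nonzero scalar, such that for every matrix X, ∑Tr(A₁^i X A₂^j A₃^k)|ijk⟩ = ∑Tr(B₁^i (Z⁻¹XZ) B₂^j B₃^k)|ijk⟩. -/

import Mathlib

open Matrix

namespace GaugeAux

/-- entry extraction: trace of a sandwiched matrix against std basis matrices -/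
lemma trace_sandwich {p q r : ℕ} (Y : Matrix (Fin q) (Fin r) ℂ) (a : Fin p) (b : Fin q) (c : Fin r) :
    ((Matrix.single a b (1:ℂ)) * Y * Matrix.single c a (1:ℂ)).trace = Y b c := by
  simp [Matrix.trace, Matrix.diag, Matrix.mul_apply, Matrix.single,
    Finset.sum_ite_eq, Finset.sum_ite_eq', ite_and]

lemma trace_basis_mul {q r : ℕ} (Y : Matrix (Fin q) (Fin r) ℂ) (b : Fin q) (c : Fin r) :
    ((Matrix.single c b (1:ℂ)) * Y).trace = Y b c := by
  simp [Matrix.trace, Matrix.diag, Matrix.mul_apply, Matrix.single,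
    Finset.sum_ite_eq, Finset.sum_ite_eq', ite_and]

/-- a matrix killed by all right multiplications is zero -/
lemma eq_zero_of_mul_right_eq_zero {a b c : ℕ} (hc : 0 < c) (H : Matrix (Fin a) (Fin b) ℂ)
    (h : ∀ N : Matrix (Fin b) (Fin c) ℂ, H * N = 0) : H = 0 := by
  ext p s
  have := congrFun (congrFun (h (Matrix.single s ⟨0, hc⟩ 1)) p) ⟨0, hc⟩
  simpa [Matrix.mul_apply, Matrix.single, Finset.sum_ite_eq, ite_and] using this

/-- injectivity of the physical map implies the tensors span the full matrix space -/
lemma span_of_inj {d D D' : ℕ} (A : Fin d → Matrix (Fin D) (Fin D') ℂ)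
    (h : Function.Injective fun X : Matrix (Fin D) (Fin D') ℂ =>
      fun i : Fin d => (A i * Xᵀ).trace) :
    ∀ M : Matrix (Fin D) (Fin D') ℂ, ∃ c : Fin d → ℂ, ∑ i, c i • A i = M := by
  intro M
  by_contra hM
  set T : (Fin d → ℂ) →ₗ[ℂ] Matrix (Fin D) (Fin D') ℂ :=
    { toFun := fun c => ∑ i, c i • A i
      map_add' := by intro x y; simp [add_smul, Finset.sum_add_distrib]
      map_smul' := by intro m x; simp [smul_smul, Finset.smul_sum] } with hT
  have hMnm : M ∉ LinearMap.range T := by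
    intro hmem
    obtain ⟨c, hc⟩ := hmem
    exact hM ⟨c, hc⟩
  obtain ⟨f, hfM, hfbot⟩ := Submodule.exists_dual_map_eq_bot_of_notMem hMnm inferInstance
  have hfA : ∀ i, f (A i) = 0 := by
    intro i
    have : f (A i) ∈ (LinearMap.range T).map f :=
      Submodule.mem_map_of_mem ⟨Pi.single i 1, by simp [hT, Pi.single_apply, ite_smul]⟩
    rw [hfbot] at this
    simpa using this
  set X : Matrix (Fin D) (Fin D') ℂ :=
    Matrix.of (fun p q => f (Matrix.single p q 1)) with hX
  have e1 : ∀ p q (cc : ℂ), f (Matrix.single p q cc) = cc * X p q := by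
    intro p q cc
    rw [show Matrix.single p q cc = cc • Matrix.single p q (1:ℂ) from by
      rw [Matrix.smul_single, smul_eq_mul, mul_one], _root_.map_smul]
    simp [hX]
  have hrep : ∀ Y : Matrix (Fin D) (Fin D') ℂ, f Y = (Y * Xᵀ).trace := by
    intro Y
    calc f Y = ∑ p, ∑ q, Y p q * X p q := by
          conv_lhs => rw [Matrix.matrix_eq_sum_single Y]
          simp only [map_sum, e1]
      _ = (Y * Xᵀ).trace := by
          simp [Matrix.trace, Matrix.diag, Matrix.mul_apply, Matrix.transpose_apply]
  have hX0 : X = 0 := by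
    apply h
    funext i
    simp only [← hrep, hfA]
    simp [Matrix.trace, Matrix.diag, Matrix.mul_apply]
  apply hfM
  rw [hrep M, hX0]
  simp

variable {ι : Type*} [Fintype ι] {V V' : Type*} [AddCommGroup V] [Module ℂ V]
  [AddCommGroup V'] [Module ℂ V']

/-- transfer a spanning family with matching kernel relations to a linear map -/
lemma transfer (v : ι → V) (v' : ι → V')
    (hsur : ∀ M : V, ∃ c : ι → ℂ, ∑ i, c i • v i = M)
    (hker : ∀ c : ι → ℂ, ∑ i, c i • v i = 0 → ∑ i, c i • v' i = 0) :
    ∃ e : V →ₗ[ℂ] V', ∀ c : ι → ℂ, e (∑ i, c i • v i) = ∑ i, c i • v' i := by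
  set T : (ι → ℂ) →ₗ[ℂ] V :=
    { toFun := fun c => ∑ i, c i • v i
      map_add' := by intro x y; simp [add_smul, Finset.sum_add_distrib]
      map_smul' := by intro m x; simp [smul_smul, Finset.smul_sum] } with hT
  set T' : (ι → ℂ) →ₗ[ℂ] V' :=
    { toFun := fun c => ∑ i, c i • v' i
      map_add' := by intro x y; simp [add_smul, Finset.sum_add_distrib]
      map_smul' := by intro m x; simp [smul_smul, Finset.smul_sum] } with hT'
  have hTsur : LinearMap.range T = ⊤ := by
    rw [LinearMap.range_eq_top]
    intro M; obtain ⟨c, hc⟩ := hsur M; exact ⟨c, hc⟩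
  obtain ⟨σ, hσ⟩ := T.exists_rightInverse_of_surjective hTsur
  refine ⟨T'.comp σ, fun c => ?_⟩
  have h1 : T (σ (T c) - c) = 0 := by
    rw [map_sub]
    have := DFunLike.congr_fun hσ (T c)
    simp only [LinearMap.comp_apply, LinearMap.id_apply] at this
    rw [this, sub_self]
  have h2 : T' (σ (T c) - c) = 0 := hker _ h1
  rw [map_sub] at h2
  exact sub_eq_zero.mp h2

/-- inverse property of a pair of transfers -/
lemma transfer_pair (v : ι → V) (v' : ι → V')
    (e : V →ₗ[ℂ] V') (f : V' →ₗ[ℂ] V)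
    (hsur : ∀ M : V, ∃ c : ι → ℂ, ∑ i, c i • v i = M)
    (hsur' : ∀ M : V', ∃ c : ι → ℂ, ∑ i, c i • v' i = M)
    (he : ∀ c : ι → ℂ, e (∑ i, c i • v i) = ∑ i, c i • v' i)
    (hf : ∀ c : ι → ℂ, f (∑ i, c i • v' i) = ∑ i, c i • v i) :
    (∀ x, f (e x) = x) ∧ (∀ y, e (f y) = y) := by
  constructor
  · intro x; obtain ⟨c, rfl⟩ := hsur x; rw [he, hf]
  · intro y; obtain ⟨c, rfl⟩ := hsur' y; rw [hf, he]

lemma transfer_finrank (v : ι → V) (v' : ι → V')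
    (e : V →ₗ[ℂ] V') (f : V' →ₗ[ℂ] V)
    (hsur : ∀ M : V, ∃ c : ι → ℂ, ∑ i, c i • v i = M)
    (hsur' : ∀ M : V', ∃ c : ι → ℂ, ∑ i, c i • v' i = M)
    (he : ∀ c : ι → ℂ, e (∑ i, c i • v i) = ∑ i, c i • v' i)
    (hf : ∀ c : ι → ℂ, f (∑ i, c i • v' i) = ∑ i, c i • v i) :
    Module.finrank ℂ V = Module.finrank ℂ V' := by
  obtain ⟨h1, h2⟩ := transfer_pair v v' e f hsur hsur' he hf
  have hbij : Function.Bijective e := by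
    constructor
    · intro x y hxy
      have := congrArg f hxy; rwa [h1, h1] at this
    · intro y; exact ⟨f y, h2 y⟩
  exact (LinearEquiv.ofBijective e hbij).finrank_eq

lemma sum_smul_mul {a b c : ℕ} {ι κ : Type*} [Fintype ι] [Fintype κ]
    (u : ι → ℂ) (w : κ → ℂ) (F : ι → Matrix (Fin a) (Fin b) ℂ)
    (G : κ → Matrix (Fin b) (Fin c) ℂ) :
    (∑ i, u i • F i) * (∑ k, w k • G k) = ∑ p : ι × κ, (u p.1 * w p.2) • (F p.1 * G p.2) := by
  rw [Matrix.sum_mul, Fintype.sum_prod_type]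
  refine Finset.sum_congr rfl fun i _ => ?_
  rw [Matrix.mul_sum]
  refine Finset.sum_congr rfl fun k _ => ?_
  rw [Matrix.smul_mul, Matrix.mul_smul, smul_smul]

/-- products of two spanning families span -/
lemma span_prod {a b c : ℕ} (hb : 0 < b) {ι κ : Type*} [Fintype ι] [Fintype κ]
    (F : ι → Matrix (Fin a) (Fin b) ℂ) (G : κ → Matrix (Fin b) (Fin c) ℂ)
    (hF : ∀ L, ∃ u : ι → ℂ, ∑ i, u i • F i = L)
    (hG : ∀ N, ∃ w : κ → ℂ, ∑ k, w k • G k = N) :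
    ∀ K : Matrix (Fin a) (Fin c) ℂ, ∃ w : ι × κ → ℂ,
      ∑ p, w p • (F p.1 * G p.2) = K := by
  set T : (ι × κ → ℂ) →ₗ[ℂ] Matrix (Fin a) (Fin c) ℂ :=
    { toFun := fun w => ∑ p, w p • (F p.1 * G p.2)
      map_add' := by intro x y; simp [add_smul, Finset.sum_add_distrib]
      map_smul' := by intro m x; simp [smul_smul, Finset.smul_sum] } with hT
  have key : ∀ (L : Matrix (Fin a) (Fin b) ℂ) (N : Matrix (Fin b) (Fin c) ℂ),
      L * N ∈ LinearMap.range T := by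
    intro L N
    obtain ⟨u, hu⟩ := hF L
    obtain ⟨w, hw⟩ := hG N
    refine ⟨fun p => u p.1 * w p.2, ?_⟩
    simp only [hT, LinearMap.coe_mk, AddHom.coe_mk]
    rw [← hu, ← hw, sum_smul_mul]
  intro K
  have hK : K ∈ LinearMap.range T := by
    rw [Matrix.matrix_eq_sum_single K]
    apply Submodule.sum_mem
    intro x _
    apply Submodule.sum_mem
    intro z _
    have hfac : Matrix.single x z (K x z) =
        (Matrix.single x ⟨0, hb⟩ (K x z) : Matrix (Fin a) (Fin b) ℂ) *
          Matrix.single (⟨0, hb⟩ : Fin b) z (1:ℂ) := by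
      ext r s
      simp only [Matrix.mul_apply, Matrix.single, Matrix.of_apply, ite_and,
        Finset.sum_ite_eq, Finset.sum_ite_eq', boole_mul, mul_ite, mul_one, mul_zero,
        Finset.mem_univ, if_true]
      by_cases h1 : x = r <;> by_cases h2 : z = s <;> simp [h1, h2]
    rw [hfac]
    exact key _ _
  exact hK

lemma trace_middle_sum {p q r : ℕ} {ι : Type*} [Fintype ι] (L : Matrix (Fin p) (Fin q) ℂ)
    (M : ι → Matrix (Fin q) (Fin r) ℂ) (N : Matrix (Fin r) (Fin p) ℂ) (c : ι → ℂ) :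
    (L * (∑ j, c j • M j) * N).trace = ∑ j, c j * (L * M j * N).trace := by
  simp only [Matrix.mul_sum, Matrix.sum_mul, Matrix.mul_smul, Matrix.smul_mul,
    Matrix.trace_sum, Matrix.trace_smul, smul_eq_mul]

lemma trace_mul_sum {p q : ℕ} {ι : Type*} [Fintype ι] (L : Matrix (Fin p) (Fin q) ℂ)
    (M : ι → Matrix (Fin q) (Fin p) ℂ) (c : ι → ℂ) :
    (L * (∑ j, c j • M j)).trace = ∑ j, c j * (L * M j).trace := by
  simp only [Matrix.mul_sum, Matrix.mul_smul, Matrix.trace_sum, Matrix.trace_smul, smul_eq_mul]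

/-- nondegeneracy of the trace pairing against two spanning families -/
lemma eq_zero_of_trace_family {p q r : ℕ} {ιL ιN : Type*} [Fintype ιL] [Fintype ιN]
    (hp : 0 < p) (L : ιL → Matrix (Fin p) (Fin q) ℂ) (N : ιN → Matrix (Fin r) (Fin p) ℂ)
    (hL : ∀ M, ∃ u : ιL → ℂ, ∑ i, u i • L i = M)
    (hN : ∀ M, ∃ v : ιN → ℂ, ∑ k, v k • N k = M)
    (Y : Matrix (Fin q) (Fin r) ℂ)
    (h : ∀ i k, (L i * Y * N k).trace = 0) : Y = 0 := by
  have h2 : ∀ (L' : Matrix (Fin p) (Fin q) ℂ) (N' : Matrix (Fin r) (Fin p) ℂ),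
      (L' * Y * N').trace = 0 := by
    intro L' N'
    obtain ⟨u, rfl⟩ := hL L'
    obtain ⟨v, rfl⟩ := hN N'
    simp only [Matrix.sum_mul, Matrix.mul_sum, Matrix.smul_mul, Matrix.mul_smul,
      Matrix.trace_sum, Matrix.trace_smul, smul_eq_mul]
    refine Finset.sum_eq_zero fun i _ => mul_eq_zero_of_right _ ?_
    refine Finset.sum_eq_zero fun k _ => ?_
    rw [h k i, mul_zero]
  ext b c
  have := h2 (Matrix.single ⟨0, hp⟩ b (1:ℂ)) (Matrix.single c ⟨0, hp⟩ (1:ℂ))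
  rw [trace_sandwich] at this
  simpa using this

/-- nondegeneracy of the trace pairing against one spanning family -/
lemma eq_zero_of_trace_family2 {q r : ℕ} {ιL : Type*} [Fintype ιL]
    (L : ιL → Matrix (Fin r) (Fin q) ℂ)
    (hL : ∀ M, ∃ u : ιL → ℂ, ∑ i, u i • L i = M)
    (Y : Matrix (Fin q) (Fin r) ℂ)
    (h : ∀ i, (L i * Y).trace = 0) : Y = 0 := by
  have h2 : ∀ L' : Matrix (Fin r) (Fin q) ℂ, (L' * Y).trace = 0 := by
    intro L'
    obtain ⟨u, rfl⟩ := hL L'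
    simp only [Matrix.sum_mul, Matrix.smul_mul, Matrix.trace_sum, Matrix.trace_smul,
      smul_eq_mul]
    refine Finset.sum_eq_zero fun i _ => ?_
    rw [h i, mul_zero]
  ext b c
  have := h2 (Matrix.single c b (1:ℂ))
  rw [trace_basis_mul] at this
  simpa using this

lemma sum_single_smul {ι : Type*} [Fintype ι] [DecidableEq ι] {V : Type*} [AddCommGroup V]
    [Module ℂ V] (v : ι → V) (j : ι) :
    ∑ i, (Pi.single j 1 : ι → ℂ) i • v i = v j := by
  exact (Finset.sum_eq_single_of_mem j (Finset.mem_univ j)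
    (fun b _ hb => by rw [Pi.single_eq_of_ne hb, zero_smul])).trans (by simp)

lemma mul_stdBasisMatrix_eq_sum {m n p : ℕ} (X : Matrix (Fin m) (Fin n) ℂ) (a : Fin n)
    (b0 : Fin p) :
    X * Matrix.single a b0 (1:ℂ) = ∑ b, X b a • Matrix.single b b0 (1:ℂ) := by
  ext r t
  simp only [Matrix.mul_apply, Matrix.single, Matrix.of_apply, Matrix.sum_apply,
    Pi.smul_apply, smul_eq_mul, ite_and, mul_ite, mul_one, mul_zero, Finset.sum_ite_eq,
    Finset.sum_ite_eq', Finset.mem_univ, if_true, Matrix.smul_apply]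

lemma mul_std_eq_mul_std {a b c d : ℕ} (H : Matrix (Fin a) (Fin b) ℂ)
    (K : Matrix (Fin a) (Fin c) ℂ) (q : Fin b) (r : Fin c) (h : ∀ p, H p q = K p r)
    (s : Fin d) :
    H * Matrix.single q s (1:ℂ) = K * Matrix.single r s (1:ℂ) := by
  ext p t
  simp only [Matrix.mul_apply, Matrix.single, Matrix.of_apply, ite_and, mul_ite,
    mul_one, mul_zero, Finset.sum_ite_eq, Finset.sum_ite_eq', Finset.mem_univ, if_true]
  by_cases h2 : s = t <;> simp [h2, h p]

lemma sum_mulVec {a b : ℕ} {ι : Type*} [Fintype ι] (f : ι → Matrix (Fin a) (Fin b) ℂ)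
    (v : Fin b → ℂ) : (∑ i, f i).mulVec v = ∑ i, (f i).mulVec v := by
  ext p
  simp only [Matrix.mulVec, dotProduct, Matrix.sum_apply, Finset.sum_apply,
    Finset.sum_mul]
  rw [Finset.sum_comm]

end GaugeAux

open GaugeAux in
set_option maxHeartbeats 1600000 in
/-- Lemma 1, gauge on an edge: two injective three-site MPS generating the
same state admit, on the edge (1,2), equal bond dimensions and an invertible gauge `Z`,
unique up to a scalar, such that inserting `X` on one side equals inserting `Z⁻¹XZ` on
the other. -/
theorem gauge_on_edge (d₁ d₂ d₃ D₁ D₂ D₃ D₁' D₂' D₃' : ℕ)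
    (hD₁ : 0 < D₁) (hD₂ : 0 < D₂) (hD₃ : 0 < D₃)
    (hD₁' : 0 < D₁') (hD₂' : 0 < D₂') (hD₃' : 0 < D₃')
    (A₁ : Fin d₁ → Matrix (Fin D₁) (Fin D₂) ℂ)
    (A₂ : Fin d₂ → Matrix (Fin D₂) (Fin D₃) ℂ)
    (A₃ : Fin d₃ → Matrix (Fin D₃) (Fin D₁) ℂ)
    (B₁ : Fin d₁ → Matrix (Fin D₁') (Fin D₂') ℂ)
    (B₂ : Fin d₂ → Matrix (Fin D₂') (Fin D₃') ℂ)
    (B₃ : Fin d₃ → Matrix (Fin D₃') (Fin D₁') ℂ)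
    (hA₁ : Function.Injective fun X : Matrix (Fin D₁) (Fin D₂) ℂ =>
      fun i : Fin d₁ => (A₁ i * Xᵀ).trace)
    (hA₂ : Function.Injective fun X : Matrix (Fin D₂) (Fin D₃) ℂ =>
      fun j : Fin d₂ => (A₂ j * Xᵀ).trace)
    (hA₃ : Function.Injective fun X : Matrix (Fin D₃) (Fin D₁) ℂ =>
      fun k : Fin d₃ => (A₃ k * Xᵀ).trace)
    (hB₁ : Function.Injective fun X : Matrix (Fin D₁') (Fin D₂') ℂ =>
      fun i : Fin d₁ => (B₁ i * Xᵀ).trace)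
    (hB₂ : Function.Injective fun X : Matrix (Fin D₂') (Fin D₃') ℂ =>
      fun j : Fin d₂ => (B₂ j * Xᵀ).trace)
    (hB₃ : Function.Injective fun X : Matrix (Fin D₃') (Fin D₁') ℂ =>
      fun k : Fin d₃ => (B₃ k * Xᵀ).trace)
    (hstate : ∀ (i : Fin d₁) (j : Fin d₂) (k : Fin d₃),
      (A₁ i * A₂ j * A₃ k).trace = (B₁ i * B₂ j * B₃ k).trace) :
    D₂ = D₂' ∧
    ∃ (Z : Matrix (Fin D₂) (Fin D₂') ℂ) (W : Matrix (Fin D₂') (Fin D₂) ℂ),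
      Z * W = 1 ∧ W * Z = 1 ∧
      (∀ (X : Matrix (Fin D₂) (Fin D₂) ℂ) (i : Fin d₁) (j : Fin d₂) (k : Fin d₃),
        (A₁ i * X * A₂ j * A₃ k).trace = (B₁ i * (W * X * Z) * B₂ j * B₃ k).trace) ∧
      ∀ (Z' : Matrix (Fin D₂) (Fin D₂') ℂ) (W' : Matrix (Fin D₂') (Fin D₂) ℂ),
        Z' * W' = 1 → W' * Z' = 1 →
        (∀ (X : Matrix (Fin D₂) (Fin D₂) ℂ) (i : Fin d₁) (j : Fin d₂) (k : Fin d₃),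
          (A₁ i * X * A₂ j * A₃ k).trace = (B₁ i * (W' * X * Z') * B₂ j * B₃ k).trace) →
        ∃ c : ℂ, c ≠ 0 ∧ Z' = c • Z := by
  classical
  -- spanning families
  have sA1 := span_of_inj A₁ hA₁
  have sA2 := span_of_inj A₂ hA₂
  have sA3 := span_of_inj A₃ hA₃
  have sB1 := span_of_inj B₁ hB₁
  have sB2 := span_of_inj B₂ hB₂
  have sB3 := span_of_inj B₃ hB₃
  -- cyclic versions of the state equality
  have hstateC : ∀ (i : Fin d₁) (j : Fin d₂) (k : Fin d₃),
      (A₂ j * A₃ k * A₁ i).trace = (B₂ j * B₃ k * B₁ i).trace := by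
    intro i j k
    rw [Matrix.trace_mul_cycle, Matrix.trace_mul_cycle (B₂ j), hstate]
  have hstateC2 : ∀ (i : Fin d₁) (j : Fin d₂) (k : Fin d₃),
      (A₃ k * A₁ i * A₂ j).trace = (B₃ k * B₁ i * B₂ j).trace := by
    intro i j k
    rw [Matrix.trace_mul_cycle, Matrix.trace_mul_cycle (B₃ k), hstateC]
  -- kernel transfer conditions
  have kQ : ∀ c : Fin d₂ → ℂ, ∑ j, c j • A₂ j = 0 → ∑ j, c j • B₂ j = 0 := by
    intro c hc
    refine eq_zero_of_trace_family hD₁' B₁ B₃ sB1 sB3 _ (fun i k => ?_)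
    calc (B₁ i * (∑ j, c j • B₂ j) * B₃ k).trace
        = ∑ j, c j * (B₁ i * B₂ j * B₃ k).trace := trace_middle_sum _ _ _ _
      _ = ∑ j, c j * (A₁ i * A₂ j * A₃ k).trace :=
          Finset.sum_congr rfl fun j _ => by rw [hstate]
      _ = (A₁ i * (∑ j, c j • A₂ j) * A₃ k).trace := (trace_middle_sum _ _ _ _).symm
      _ = 0 := by rw [hc, Matrix.mul_zero, Matrix.zero_mul, Matrix.trace_zero]
  have kQ' : ∀ c : Fin d₂ → ℂ, ∑ j, c j • B₂ j = 0 → ∑ j, c j • A₂ j = 0 := by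
    intro c hc
    refine eq_zero_of_trace_family hD₁ A₁ A₃ sA1 sA3 _ (fun i k => ?_)
    calc (A₁ i * (∑ j, c j • A₂ j) * A₃ k).trace
        = ∑ j, c j * (A₁ i * A₂ j * A₃ k).trace := trace_middle_sum _ _ _ _
      _ = ∑ j, c j * (B₁ i * B₂ j * B₃ k).trace :=
          Finset.sum_congr rfl fun j _ => by rw [hstate]
      _ = (B₁ i * (∑ j, c j • B₂ j) * B₃ k).trace := (trace_middle_sum _ _ _ _).symm
      _ = 0 := by rw [hc, Matrix.mul_zero, Matrix.zero_mul, Matrix.trace_zero]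
  have kS : ∀ c : Fin d₃ → ℂ, ∑ k, c k • A₃ k = 0 → ∑ k, c k • B₃ k = 0 := by
    intro c hc
    refine eq_zero_of_trace_family hD₂' B₂ B₁ sB2 sB1 _ (fun j i => ?_)
    calc (B₂ j * (∑ k, c k • B₃ k) * B₁ i).trace
        = ∑ k, c k * (B₂ j * B₃ k * B₁ i).trace := trace_middle_sum _ _ _ _
      _ = ∑ k, c k * (A₂ j * A₃ k * A₁ i).trace :=
          Finset.sum_congr rfl fun k _ => by rw [hstateC]
      _ = (A₂ j * (∑ k, c k • A₃ k) * A₁ i).trace := (trace_middle_sum _ _ _ _).symm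
      _ = 0 := by rw [hc, Matrix.mul_zero, Matrix.zero_mul, Matrix.trace_zero]
  have kS' : ∀ c : Fin d₃ → ℂ, ∑ k, c k • B₃ k = 0 → ∑ k, c k • A₃ k = 0 := by
    intro c hc
    refine eq_zero_of_trace_family hD₂ A₂ A₁ sA2 sA1 _ (fun j i => ?_)
    calc (A₂ j * (∑ k, c k • A₃ k) * A₁ i).trace
        = ∑ k, c k * (A₂ j * A₃ k * A₁ i).trace := trace_middle_sum _ _ _ _
      _ = ∑ k, c k * (B₂ j * B₃ k * B₁ i).trace :=
          Finset.sum_congr rfl fun k _ => by rw [hstateC]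
      _ = (B₂ j * (∑ k, c k • B₃ k) * B₁ i).trace := (trace_middle_sum _ _ _ _).symm
      _ = 0 := by rw [hc, Matrix.mul_zero, Matrix.zero_mul, Matrix.trace_zero]
  have kR : ∀ c : Fin d₂ × Fin d₃ → ℂ, ∑ p, c p • (A₂ p.1 * A₃ p.2) = 0 →
      ∑ p, c p • (B₂ p.1 * B₃ p.2) = 0 := by
    intro c hc
    refine eq_zero_of_trace_family2 B₁ sB1 _ (fun i => ?_)
    calc (B₁ i * ∑ p, c p • (B₂ p.1 * B₃ p.2)).trace
        = ∑ p, c p * (B₁ i * (B₂ p.1 * B₃ p.2)).trace := trace_mul_sum _ _ _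
      _ = ∑ p, c p * (A₁ i * (A₂ p.1 * A₃ p.2)).trace := by
          refine Finset.sum_congr rfl fun p _ => ?_
          rw [← Matrix.mul_assoc, ← Matrix.mul_assoc, hstate]
      _ = (A₁ i * ∑ p, c p • (A₂ p.1 * A₃ p.2)).trace := (trace_mul_sum _ _ _).symm
      _ = 0 := by rw [hc, Matrix.mul_zero, Matrix.trace_zero]
  have kR' : ∀ c : Fin d₂ × Fin d₃ → ℂ, ∑ p, c p • (B₂ p.1 * B₃ p.2) = 0 →
      ∑ p, c p • (A₂ p.1 * A₃ p.2) = 0 := by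
    intro c hc
    refine eq_zero_of_trace_family2 A₁ sA1 _ (fun i => ?_)
    calc (A₁ i * ∑ p, c p • (A₂ p.1 * A₃ p.2)).trace
        = ∑ p, c p * (A₁ i * (A₂ p.1 * A₃ p.2)).trace := trace_mul_sum _ _ _
      _ = ∑ p, c p * (B₁ i * (B₂ p.1 * B₃ p.2)).trace := by
          refine Finset.sum_congr rfl fun p _ => ?_
          rw [← Matrix.mul_assoc, ← Matrix.mul_assoc, hstate]
      _ = (B₁ i * ∑ p, c p • (B₂ p.1 * B₃ p.2)).trace := (trace_mul_sum _ _ _).symm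
      _ = 0 := by rw [hc, Matrix.mul_zero, Matrix.trace_zero]
  have kR2 : ∀ c : Fin d₃ × Fin d₁ → ℂ, ∑ p, c p • (A₃ p.1 * A₁ p.2) = 0 →
      ∑ p, c p • (B₃ p.1 * B₁ p.2) = 0 := by
    intro c hc
    refine eq_zero_of_trace_family2 B₂ sB2 _ (fun j => ?_)
    calc (B₂ j * ∑ p, c p • (B₃ p.1 * B₁ p.2)).trace
        = ∑ p, c p * (B₂ j * (B₃ p.1 * B₁ p.2)).trace := trace_mul_sum _ _ _
      _ = ∑ p, c p * (A₂ j * (A₃ p.1 * A₁ p.2)).trace := by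
          refine Finset.sum_congr rfl fun p _ => ?_
          rw [← Matrix.mul_assoc, ← Matrix.mul_assoc, hstateC]
      _ = (A₂ j * ∑ p, c p • (A₃ p.1 * A₁ p.2)).trace := (trace_mul_sum _ _ _).symm
      _ = 0 := by rw [hc, Matrix.mul_zero, Matrix.trace_zero]
  have kR2' : ∀ c : Fin d₃ × Fin d₁ → ℂ, ∑ p, c p • (B₃ p.1 * B₁ p.2) = 0 →
      ∑ p, c p • (A₃ p.1 * A₁ p.2) = 0 := by
    intro c hc
    refine eq_zero_of_trace_family2 A₂ sA2 _ (fun j => ?_)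
    calc (A₂ j * ∑ p, c p • (A₃ p.1 * A₁ p.2)).trace
        = ∑ p, c p * (A₂ j * (A₃ p.1 * A₁ p.2)).trace := trace_mul_sum _ _ _
      _ = ∑ p, c p * (B₂ j * (B₃ p.1 * B₁ p.2)).trace := by
          refine Finset.sum_congr rfl fun p _ => ?_
          rw [← Matrix.mul_assoc, ← Matrix.mul_assoc, hstateC]
      _ = (B₂ j * ∑ p, c p • (B₃ p.1 * B₁ p.2)).trace := (trace_mul_sum _ _ _).symm
      _ = 0 := by rw [hc, Matrix.mul_zero, Matrix.trace_zero]
  have kR3 : ∀ c : Fin d₁ × Fin d₂ → ℂ, ∑ p, c p • (A₁ p.1 * A₂ p.2) = 0 →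
      ∑ p, c p • (B₁ p.1 * B₂ p.2) = 0 := by
    intro c hc
    refine eq_zero_of_trace_family2 B₃ sB3 _ (fun k => ?_)
    calc (B₃ k * ∑ p, c p • (B₁ p.1 * B₂ p.2)).trace
        = ∑ p, c p * (B₃ k * (B₁ p.1 * B₂ p.2)).trace := trace_mul_sum _ _ _
      _ = ∑ p, c p * (A₃ k * (A₁ p.1 * A₂ p.2)).trace := by
          refine Finset.sum_congr rfl fun p _ => ?_
          rw [← Matrix.mul_assoc, ← Matrix.mul_assoc, hstateC2]
      _ = (A₃ k * ∑ p, c p • (A₁ p.1 * A₂ p.2)).trace := (trace_mul_sum _ _ _).symm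
      _ = 0 := by rw [hc, Matrix.mul_zero, Matrix.trace_zero]
  have kR3' : ∀ c : Fin d₁ × Fin d₂ → ℂ, ∑ p, c p • (B₁ p.1 * B₂ p.2) = 0 →
      ∑ p, c p • (A₁ p.1 * A₂ p.2) = 0 := by
    intro c hc
    refine eq_zero_of_trace_family2 A₃ sA3 _ (fun k => ?_)
    calc (A₃ k * ∑ p, c p • (A₁ p.1 * A₂ p.2)).trace
        = ∑ p, c p * (A₃ k * (A₁ p.1 * A₂ p.2)).trace := trace_mul_sum _ _ _
      _ = ∑ p, c p * (B₃ k * (B₁ p.1 * B₂ p.2)).trace := by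
          refine Finset.sum_congr rfl fun p _ => ?_
          rw [← Matrix.mul_assoc, ← Matrix.mul_assoc, hstateC2]
      _ = (B₃ k * ∑ p, c p • (B₁ p.1 * B₂ p.2)).trace := (trace_mul_sum _ _ _).symm
      _ = 0 := by rw [hc, Matrix.mul_zero, Matrix.trace_zero]
  -- spanning of product families
  have pA := span_prod hD₃ A₂ A₃ sA2 sA3
  have pB := span_prod hD₃' B₂ B₃ sB2 sB3
  have p2A := span_prod hD₁ A₃ A₁ sA3 sA1
  have p2B := span_prod hD₁' B₃ B₁ sB3 sB1
  have p3A := span_prod hD₂ A₁ A₂ sA1 sA2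
  have p3B := span_prod hD₂' B₁ B₂ sB1 sB2
  -- bond dimension equalities
  have hfr : ∀ (a b : ℕ), Module.finrank ℂ (Matrix (Fin a) (Fin b) ℂ) = a * b := by
    intro a b
    simp [Module.finrank_matrix]
  have hdim1 : D₂ * D₁ = D₂' * D₁' := by
    obtain ⟨e, he⟩ := transfer _ _ pA kR
    obtain ⟨f, hf⟩ := transfer _ _ pB kR'
    have := transfer_finrank _ _ e f pA pB he hf
    rwa [hfr, hfr] at this
  have hdim2 : D₃ * D₂ = D₃' * D₂' := by
    obtain ⟨e, he⟩ := transfer _ _ p2A kR2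
    obtain ⟨f, hf⟩ := transfer _ _ p2B kR2'
    have := transfer_finrank _ _ e f p2A p2B he hf
    rwa [hfr, hfr] at this
  have hdim3 : D₁ * D₃ = D₁' * D₃' := by
    obtain ⟨e, he⟩ := transfer _ _ p3A kR3
    obtain ⟨f, hf⟩ := transfer _ _ p3B kR3'
    have := transfer_finrank _ _ e f p3A p3B he hf
    rwa [hfr, hfr] at this
  have hD2 : D₂ = D₂' := by
    have e1 : D₂ * D₂ * (D₁ * D₃) = D₂' * D₂' * (D₁' * D₃') := by
      calc D₂ * D₂ * (D₁ * D₃) = (D₂ * D₁) * (D₃ * D₂) := by ring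
        _ = (D₂' * D₁') * (D₃' * D₂') := by rw [hdim1, hdim2]
        _ = D₂' * D₂' * (D₁' * D₃') := by ring
    rw [← hdim3] at e1
    exact Nat.mul_self_inj.mp (Nat.eq_of_mul_eq_mul_right (Nat.mul_pos hD₁ hD₃) e1)
  -- the transported maps
  obtain ⟨Qf, hQ⟩ := transfer A₂ B₂ sA2 kQ
  obtain ⟨Qr, hQt⟩ := transfer B₂ A₂ sB2 kQ'
  obtain ⟨Sf, hS⟩ := transfer A₃ B₃ sA3 kS
  obtain ⟨Sr, hSr⟩ := transfer B₃ A₃ sB3 kS'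
  obtain ⟨Rf, hR⟩ := transfer _ _ pA kR
  have hQA : ∀ j, Qf (A₂ j) = B₂ j := by
    intro j
    have h := hQ (Pi.single j 1)
    rwa [sum_single_smul, sum_single_smul] at h
  have hQrB : ∀ j, Qr (B₂ j) = A₂ j := by
    intro j
    have h := hQt (Pi.single j 1)
    rwa [sum_single_smul, sum_single_smul] at h
  have hQrQ : ∀ M, Qr (Qf M) = M := by
    intro M; obtain ⟨c, rfl⟩ := sA2 M; rw [hQ, hQt]
  have hQQr : ∀ M', Qf (Qr M') = M' := by
    intro M'; obtain ⟨c, rfl⟩ := sB2 M'; rw [hQt, hQ]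
  have hSrS : ∀ N, Sr (Sf N) = N := by
    intro N; obtain ⟨c, rfl⟩ := sA3 N; rw [hS, hSr]
  have hSSr : ∀ N', Sf (Sr N') = N' := by
    intro N'; obtain ⟨c, rfl⟩ := sB3 N'; rw [hSr, hS]
  have hRmul : ∀ (M : Matrix (Fin D₂) (Fin D₃) ℂ) (N : Matrix (Fin D₃) (Fin D₁) ℂ),
      Rf (M * N) = Qf M * Sf N := by
    intro M N
    obtain ⟨m, rfl⟩ := sA2 M
    obtain ⟨n, rfl⟩ := sA3 N
    rw [sum_smul_mul, hR (fun p => m p.1 * n p.2), hQ, hS, ← sum_smul_mul]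
  have hRker : ∀ K, Rf K = 0 → K = 0 := by
    intro K h
    obtain ⟨c, rfl⟩ := pA K
    rw [hR] at h
    exact kR' c h
  have hRinj : Function.Injective Rf := by
    intro x y h
    have h0 : Rf (x - y) = 0 := by rw [map_sub, h, sub_self]
    exact sub_eq_zero.mp (hRker _ h0)
  -- key module-intertwining property
  have claimB : ∀ (X : Matrix (Fin D₂) (Fin D₂) ℂ) (M' : Matrix (Fin D₂') (Fin D₃') ℂ)
      (C : Matrix (Fin D₃') (Fin D₃') ℂ), Qf (X * Qr (M' * C)) = Qf (X * Qr M') * C := by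
    intro X M' C
    have key : ∀ N'' : Matrix (Fin D₃') (Fin D₁') ℂ,
        (Qf (X * Qr (M' * C)) - Qf (X * Qr M') * C) * N'' = 0 := by
      intro N''
      have h1 : Qr (M' * C) * Sr N'' = Qr M' * Sr (C * N'') := by
        apply hRinj
        rw [hRmul, hRmul, hQQr, hQQr, hSSr, hSSr, Matrix.mul_assoc]
      have h2 : Rf (X * Qr (M' * C) * Sr N'') = Rf (X * Qr M' * Sr (C * N'')) := by
        rw [Matrix.mul_assoc, Matrix.mul_assoc, h1]
      rw [hRmul, hRmul, hSSr, hSSr] at h2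
      rw [Matrix.sub_mul, h2, Matrix.mul_assoc, sub_self]
    exact sub_eq_zero.mp (eq_zero_of_mul_right_eq_zero hD₁' _ key)
  -- the algebra morphism Ψ
  set r0 : Fin D₃' := ⟨0, hD₃'⟩ with hr0
  set PsiL : Matrix (Fin D₂) (Fin D₂) ℂ →ₗ[ℂ] Matrix (Fin D₂') (Fin D₂') ℂ :=
    { toFun := fun X =>
        Matrix.of fun p q => (Qf (X * Qr (Matrix.single q r0 1))) p r0
      map_add' := by
        intro X Y; ext p q
        simp [Matrix.add_mul, map_add]
      map_smul' := by
        intro m X; ext p q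
        simp [Matrix.smul_mul, _root_.map_smul] } with hPsiL
  have hPsidef : ∀ X p q,
      PsiL X p q = (Qf (X * Qr (Matrix.single q r0 1))) p r0 := fun X p q => rfl
  have hPsiAct : ∀ X M', PsiL X * M' = Qf (X * Qr M') := by
    intro X
    set L1 : Matrix (Fin D₂') (Fin D₃') ℂ →ₗ[ℂ] Matrix (Fin D₂') (Fin D₃') ℂ :=
      { toFun := fun M' => PsiL X * M'
        map_add' := by intro a b; simp [Matrix.mul_add]
        map_smul' := by intro m a; simp [Matrix.mul_smul] } with hL1
    set L2 : Matrix (Fin D₂') (Fin D₃') ℂ →ₗ[ℂ] Matrix (Fin D₂') (Fin D₃') ℂ :=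
      { toFun := fun M' => Qf (X * Qr M')
        map_add' := by intro a b; simp [map_add, Matrix.mul_add]
        map_smul' := by intro m a; simp [_root_.map_smul, Matrix.mul_smul] } with hL2
    have hLeq : L1 = L2 := by
      apply Module.Basis.ext (Matrix.stdBasis ℂ (Fin D₂') (Fin D₃'))
      rintro ⟨q, s⟩
      rw [Matrix.stdBasis_eq_single]
      show PsiL X * Matrix.single q s (1:ℂ) = Qf (X * Qr (Matrix.single q s (1:ℂ)))
      have hfac : (Matrix.single q s (1:ℂ) : Matrix (Fin D₂') (Fin D₃') ℂ) =
          Matrix.single q r0 (1:ℂ) * Matrix.single r0 s (1:ℂ) := by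
        ext r t
        simp only [Matrix.mul_apply, Matrix.single, Matrix.of_apply, ite_and,
          boole_mul, Finset.sum_ite_eq, Finset.sum_ite_eq', Finset.mem_univ, if_true]
        by_cases h1 : q = r <;> by_cases h2 : s = t <;> simp [h1, h2]
      conv_rhs => rw [hfac]
      rw [claimB X (Matrix.single q r0 1) (Matrix.single r0 s 1)]
      exact mul_std_eq_mul_std (PsiL X) (Qf (X * Qr (Matrix.single q r0 1))) q r0
        (fun p => hPsidef X p q) s
    intro M'
    exact DFunLike.congr_fun hLeq M'
  have hPsiB : ∀ X j, PsiL X * B₂ j = Qf (X * A₂ j) := by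
    intro X j
    rw [hPsiAct, hQrB]
  have hPsiOne : PsiL 1 = 1 := by
    have h : ∀ M' : Matrix (Fin D₂') (Fin D₃') ℂ, (PsiL 1 - 1) * M' = 0 := by
      intro M'
      rw [Matrix.sub_mul, hPsiAct, Matrix.one_mul, hQQr, Matrix.one_mul, sub_self]
    exact sub_eq_zero.mp (eq_zero_of_mul_right_eq_zero hD₃' _ h)
  have hPsiMul : ∀ X Y, PsiL (X * Y) = PsiL X * PsiL Y := by
    intro X Y
    have h : ∀ M' : Matrix (Fin D₂') (Fin D₃') ℂ,
        (PsiL (X * Y) - PsiL X * PsiL Y) * M' = 0 := by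
      intro M'
      have r1 : PsiL (X * Y) * M' = Qf (X * (Y * Qr M')) := by
        rw [hPsiAct, Matrix.mul_assoc]
      have r2 : (PsiL X * PsiL Y) * M' = Qf (X * (Y * Qr M')) := by
        rw [Matrix.mul_assoc, hPsiAct Y M', hPsiAct X, hQrQ]
      rw [Matrix.sub_mul, r1, r2, sub_self]
    exact sub_eq_zero.mp (eq_zero_of_mul_right_eq_zero hD₃' _ h)
  have hPsiKer : ∀ X, PsiL X = 0 → X = 0 := by
    intro X h
    have h1 : ∀ j, X * A₂ j = 0 := by
      intro j
      have hb := hPsiB X j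
      rw [h, Matrix.zero_mul] at hb
      have h2 : Qr (Qf (X * A₂ j)) = Qr 0 := by rw [← hb]
      rwa [hQrQ, map_zero] at h2
    have h2 : ∀ M : Matrix (Fin D₂) (Fin D₃) ℂ, X * M = 0 := by
      intro M; obtain ⟨c, rfl⟩ := sA2 M
      rw [Matrix.mul_sum]
      refine Finset.sum_eq_zero fun j _ => ?_
      rw [Matrix.mul_smul, h1, smul_zero]
    exact eq_zero_of_mul_right_eq_zero hD₃ _ h2
  have hPsiInj : Function.Injective PsiL := by
    intro x y h
    have h0 : PsiL (x - y) = 0 := by rw [map_sub, h, sub_self]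
    exact sub_eq_zero.mp (hPsiKer _ h0)
  have hPsiSur : Function.Surjective PsiL := by
    have hfr2 : Module.finrank ℂ (Matrix (Fin D₂) (Fin D₂) ℂ) =
        Module.finrank ℂ (Matrix (Fin D₂') (Fin D₂') ℂ) := by
      rw [hfr, hfr, hD2]
    exact (LinearMap.injective_iff_surjective_of_finrank_eq_finrank hfr2).mp hPsiInj
  -- Skolem–Noether: realize Ψ as conjugation
  set b0 : Fin D₂ := ⟨0, hD₂⟩ with hb0
  set Eb : Matrix (Fin D₂) (Fin D₂) ℂ := Matrix.single b0 b0 1 with hEbdef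
  have hEb : Eb * Eb = Eb := by
    rw [hEbdef, Matrix.single_mul_single_same, one_mul]
  have hEbne : Eb ≠ 0 := by
    intro h
    have := congrFun (congrFun h b0) b0
    simp [hEbdef, Matrix.single] at this
  have hEE : PsiL Eb * PsiL Eb = PsiL Eb := by rw [← hPsiMul, hEb]
  have hEne : PsiL Eb ≠ 0 := fun h => hEbne (hPsiKer _ h)
  obtain ⟨w0, hw0⟩ : ∃ w0, (PsiL Eb).mulVec w0 ≠ 0 := by
    by_contra hcon
    push_neg at hcon
    apply hEne
    ext p q
    have := congrFun (hcon (Pi.single q 1)) p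
    rw [Matrix.mulVec_single] at this
    simpa using this
  set u : Fin D₂' → ℂ := (PsiL Eb).mulVec w0 with hudef
  have hEu : (PsiL Eb).mulVec u = u := by
    rw [hudef, Matrix.mulVec_mulVec, hEE]
  set z : Fin D₂ → Fin D₂' → ℂ := fun a => (PsiL (Matrix.single a b0 1)).mulVec u
    with hzdef
  have hzb0 : z b0 = u := hEu
  set W : Matrix (Fin D₂') (Fin D₂) ℂ := Matrix.of fun p a => z a p with hWdef
  have hWcol : ∀ x : Fin D₂ → ℂ, W.mulVec x = ∑ a, x a • z a := by
    intro x
    ext p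
    simp only [Matrix.mulVec, dotProduct, hWdef, Matrix.of_apply, Finset.sum_apply,
      Pi.smul_apply, smul_eq_mul]
    exact Finset.sum_congr rfl fun a _ => mul_comm _ _
  have hzsum : ∀ (X : Matrix (Fin D₂) (Fin D₂) ℂ) (a : Fin D₂),
      (PsiL (X * Matrix.single a b0 1)).mulVec u = ∑ b, X b a • z b := by
    intro X a
    rw [mul_stdBasisMatrix_eq_sum X a b0, map_sum]
    rw [GaugeAux.sum_mulVec]
    refine Finset.sum_congr rfl fun b _ => ?_
    rw [_root_.map_smul, Matrix.smul_mulVec]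
  have hintertwine : ∀ X, PsiL X * W = W * X := by
    intro X
    ext p a
    have lhs : (PsiL X * W) p a = ((PsiL X).mulVec (z a)) p := by
      simp [Matrix.mul_apply, Matrix.mulVec, dotProduct, hWdef]
    have key : (PsiL X).mulVec (z a) = ∑ b, X b a • z b := by
      rw [hzdef]
      show (PsiL X).mulVec ((PsiL (Matrix.single a b0 1)).mulVec u) = _
      rw [Matrix.mulVec_mulVec, ← hPsiMul, hzsum]
    have rhs : (W * X) p a = (∑ b, X b a • z b) p := by
      simp only [Matrix.mul_apply, hWdef, Matrix.of_apply, Finset.sum_apply,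
        Pi.smul_apply, smul_eq_mul]
      exact Finset.sum_congr rfl fun b _ => mul_comm _ _
    rw [lhs, key, rhs]
  have hWsur : ∀ y : Fin D₂' → ℂ, ∃ x, W.mulVec x = y := by
    intro y
    have hune : u ≠ 0 := hw0
    obtain ⟨cI, hcI⟩ : ∃ cI, u cI ≠ 0 := by
      by_contra hcon
      push_neg at hcon
      exact hune (funext hcon)
    obtain ⟨X0, hX0⟩ := hPsiSur (Matrix.vecMulVec y (Pi.single cI (u cI)⁻¹))
    refine ⟨fun a => X0 a b0, ?_⟩
    rw [hWcol]
    have e1 : ∑ a, X0 a b0 • z a = (PsiL (X0 * Eb)).mulVec u := by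
      rw [hEbdef, hzsum X0 b0]
    rw [e1, hPsiMul, ← Matrix.mulVec_mulVec, hEu, hX0]
    ext p
    simp only [Matrix.mulVec, dotProduct, Matrix.vecMulVec_apply, Pi.single_apply,
      mul_ite, mul_zero, ite_mul, zero_mul, Finset.sum_ite_eq', Finset.mem_univ, if_true]
    rw [mul_assoc, inv_mul_cancel₀ hcI, mul_one]
  -- invert W
  have hWbij : Function.Bijective (Matrix.toLin' W) := by
    have hsur : Function.Surjective (Matrix.toLin' W) := by
      intro y
      obtain ⟨x, hx⟩ := hWsur y
      exact ⟨x, by rw [Matrix.toLin'_apply, hx]⟩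
    have hfr3 : Module.finrank ℂ (Fin D₂ → ℂ) = Module.finrank ℂ (Fin D₂' → ℂ) := by
      simp [hD2]
    exact ⟨(LinearMap.injective_iff_surjective_of_finrank_eq_finrank hfr3).mpr hsur, hsur⟩
  set eW := LinearEquiv.ofBijective (Matrix.toLin' W) hWbij with heW
  set Z : Matrix (Fin D₂) (Fin D₂') ℂ := LinearMap.toMatrix' (eW.symm :
    (Fin D₂' → ℂ) →ₗ[ℂ] (Fin D₂ → ℂ)) with hZdef
  have htlZ : Matrix.toLin' Z = (eW.symm : (Fin D₂' → ℂ) →ₗ[ℂ] (Fin D₂ → ℂ)) :=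
    Matrix.toLin'_toMatrix' _
  have hWZ : W * Z = 1 := by
    apply Matrix.toLin'.injective
    rw [Matrix.toLin'_mul, Matrix.toLin'_one, htlZ]
    refine LinearMap.ext fun v => ?_
    simp only [LinearMap.comp_apply, LinearMap.id_apply]
    exact eW.apply_symm_apply v
  have hZW : Z * W = 1 := by
    apply Matrix.toLin'.injective
    rw [Matrix.toLin'_mul, Matrix.toLin'_one, htlZ]
    refine LinearMap.ext fun v => ?_
    simp only [LinearMap.comp_apply, LinearMap.id_apply]
    exact eW.symm_apply_apply v
  have hPsiWXZ : ∀ X, PsiL X = W * X * Z := by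
    intro X
    calc PsiL X = PsiL X * (W * Z) := by rw [hWZ, Matrix.mul_one]
      _ = (PsiL X * W) * Z := by rw [Matrix.mul_assoc]
      _ = (W * X) * Z := by rw [hintertwine]
  -- the main insertion identity
  have hmain : ∀ (X : Matrix (Fin D₂) (Fin D₂) ℂ) (i : Fin d₁) (j : Fin d₂) (k : Fin d₃),
      (A₁ i * X * A₂ j * A₃ k).trace = (B₁ i * (W * X * Z) * B₂ j * B₃ k).trace := by
    intro X i j k
    rw [← hPsiWXZ]
    obtain ⟨c, hc⟩ := sA2 (X * A₂ j)
    have hq : PsiL X * B₂ j = ∑ m, c m • B₂ m := by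
      rw [hPsiB, ← hc, hQ]
    calc (A₁ i * X * A₂ j * A₃ k).trace
        = (A₁ i * (X * A₂ j) * A₃ k).trace := by rw [Matrix.mul_assoc (A₁ i) X (A₂ j)]
      _ = (A₁ i * (∑ m, c m • A₂ m) * A₃ k).trace := by rw [hc]
      _ = ∑ m, c m * (A₁ i * A₂ m * A₃ k).trace := trace_middle_sum _ _ _ _
      _ = ∑ m, c m * (B₁ i * B₂ m * B₃ k).trace :=
          Finset.sum_congr rfl fun m _ => by rw [hstate]
      _ = (B₁ i * (∑ m, c m • B₂ m) * B₃ k).trace := (trace_middle_sum _ _ _ _).symm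
      _ = (B₁ i * (PsiL X * B₂ j) * B₃ k).trace := by rw [hq]
      _ = (B₁ i * PsiL X * B₂ j * B₃ k).trace := by rw [Matrix.mul_assoc (B₁ i) (PsiL X) (B₂ j)]
  refine ⟨hD2, Z, W, hZW, hWZ, hmain, ?_⟩
  -- uniqueness up to scalar
  intro Z' W' hZ'W' hW'Z' hid'
  have hGzero : ∀ X : Matrix (Fin D₂) (Fin D₂) ℂ, W * X * Z = W' * X * Z' := by
    intro X
    have h0 : ∀ (i : Fin d₁) (p : Fin d₂ × Fin d₃),
        (B₁ i * (W * X * Z - W' * X * Z') * (B₂ p.1 * B₃ p.2)).trace = 0 := by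
      rintro i ⟨j, k⟩
      have hEq : (B₁ i * (W * X * Z) * B₂ j * B₃ k).trace
          = (B₁ i * (W' * X * Z') * B₂ j * B₃ k).trace := by
        rw [← hmain X i j k, hid' X i j k]
      have expand : ∀ G : Matrix (Fin D₂') (Fin D₂') ℂ,
          B₁ i * G * (B₂ j * B₃ k) = B₁ i * G * B₂ j * B₃ k := fun G => by
        rw [Matrix.mul_assoc (B₁ i * G) (B₂ j) (B₃ k)]
      rw [Matrix.mul_sub, Matrix.sub_mul, Matrix.trace_sub, expand, expand, hEq, sub_self]
    have := eq_zero_of_trace_family hD₁' B₁ (fun p : Fin d₂ × Fin d₃ => B₂ p.1 * B₃ p.2)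
      sB1 pB _ h0
    exact sub_eq_zero.mp this
  set T : Matrix (Fin D₂) (Fin D₂) ℂ := Z * W' with hT
  have hcomm : ∀ X : Matrix (Fin D₂) (Fin D₂) ℂ, X * T = T * X := by
    intro X
    have h := hGzero X
    have e1 : Z * (W * X * Z) * W' = X * T := by
      calc Z * (W * X * Z) * W' = ((Z * W) * X) * (Z * W') := by
            simp only [← Matrix.mul_assoc]
        _ = X * T := by rw [hZW, Matrix.one_mul, hT]
    have e2 : Z * (W' * X * Z') * W' = T * X := by
      calc Z * (W' * X * Z') * W' = ((Z * W') * X) * (Z' * W') := by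
            simp only [← Matrix.mul_assoc]
        _ = T * X := by rw [hZ'W', Matrix.mul_one, hT]
    rw [← e1, ← e2, h]
  set cc : ℂ := T b0 b0 with hcc
  have hTscal : T = cc • (1 : Matrix (Fin D₂) (Fin D₂) ℂ) := by
    ext q s
    have h1 := congrFun (congrFun (hcomm (Matrix.single b0 q 1)) b0) s
    rw [Matrix.single_mul_apply_same, one_mul] at h1
    by_cases hsq : s = q
    · subst hsq
      rw [Matrix.mul_single_apply_same] at h1
      rw [h1]
      simp [Matrix.one_apply, hcc]
    · rw [Matrix.mul_single_apply_of_ne _ _ _ _ _ hsq] at h1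
      rw [h1]
      simp only [Matrix.smul_apply, Matrix.one_apply, smul_eq_mul]
      rw [if_neg (fun h => hsq h.symm), mul_zero]
  have hccne : cc ≠ 0 := by
    intro h0
    have hT1 : T * (Z' * W) = 1 := by
      calc T * (Z' * W) = Z * (W' * Z') * W := by
            rw [hT]; simp only [Matrix.mul_assoc]
        _ = Z * W := by rw [hW'Z', Matrix.mul_one]
        _ = 1 := hZW
    rw [hTscal, h0, zero_smul, Matrix.zero_mul] at hT1
    have := congrFun (congrFun hT1 b0) b0
    simp [Matrix.one_apply] at this
  refine ⟨cc⁻¹, inv_ne_zero hccne, ?_⟩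
  have e4 : T * Z' = Z := by
    rw [hT, Matrix.mul_assoc, hW'Z', Matrix.mul_one]
  have e3 : Z = cc • Z' := by
    rw [← e4, hTscal, Matrix.smul_mul, Matrix.one_mul]
  rw [e3, smul_smul, inv_mul_cancel₀ hccne, one_smul]
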